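/- Layer-cake / truncated integral bound: Let a₁,…,a_k ∈ [0, C] be nonnegative reals bounded by C ≥ 1, and suppose for every y > 0 the count satisfies #{t : a_t > y} ≤ (β/y + 1)·d(y) + 1 where d(y) is nonincreasing in y and d denotes d(ω) for fixed 0 < ω ≤ C. Then Σ_{t=1}^k a_t ≤ kω + (d+1)·C + d·β·log(C/ω). -/

import Mathlib

open MeasureTheory intervalIntegral

private lemma ind_antitone (c : ℝ) :
    Antitone (fun y : ℝ => if y < c then (1:ℝ) else 0) := by
  intro y z hyz
  dsimp only
  split_ifs with h1 h2
  · exact le_refl _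
  · exact absurd (lt_of_le_of_lt hyz h1) h2
  · norm_num
  · exact le_refl _

private lemma ind_integrable (c ω C : ℝ) :
    IntervalIntegrable (fun y : ℝ => if y < c then (1:ℝ) else 0) volume ω C :=
  (ind_antitone c).intervalIntegrable

private lemma ind_integral (c ω C : ℝ) (hω : ω ≤ C) (hc : c ≤ C) :
    ∫ y in ω..C, (if y < c then (1:ℝ) else 0) = max (c - ω) 0 := by
  have hae : ∫ y in ω..C, (if y < c then (1:ℝ) else 0)
      = ∫ y in ω..C, Set.indicator {x : ℝ | x ≤ c} (fun _ => (1:ℝ)) y := by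
    apply intervalIntegral.integral_congr_ae
    have hc' : (volume : Measure ℝ) {c} = 0 := measure_singleton c
    filter_upwards [measure_eq_zero_iff_ae_notMem.mp hc'] with x hx _
    simp only [Set.indicator, Set.mem_setOf_eq]
    have hiff : x < c ↔ x ≤ c := by
      constructor
      · exact le_of_lt
      · intro h; exact lt_of_le_of_ne h (by simpa using hx)
    simp [hiff]
  rw [hae]
  rcases le_or_gt c ω with h | h
  · rw [max_eq_right (by linarith)]
    apply integral_zero_ae
    filter_upwards with x hx
    rw [Set.uIoc_of_le hω] at hx
    have hxc : ¬ x ≤ c := by push_neg; exact lt_of_le_of_lt h hx.1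
    simp [Set.indicator, hxc]
  · rw [integral_indicator ⟨h.le, hc⟩, max_eq_left (by linarith)]
    simp

theorem layer_cake_bound (k : ℕ) (a : ℕ → ℝ) (C β ω : ℝ) (d : ℝ → ℝ)
    (hC : 1 ≤ C) (hβ : 0 ≤ β) (hω0 : 0 < ω) (hωC : ω ≤ C)
    (ha : ∀ t < k, a t ∈ Set.Icc (0 : ℝ) C)
    (hd0 : ∀ y, 0 < y → 0 ≤ d y)
    (hdmono : ∀ y z : ℝ, 0 < y → y ≤ z → d z ≤ d y)
    (hcount : ∀ y : ℝ, 0 < y →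
      (((Finset.range k).filter fun t => y < a t).card : ℝ) ≤ (β / y + 1) * d y + 1) :
    ∑ t ∈ Finset.range k, a t ≤ k * ω + (d ω + 1) * C + d ω * β * Real.log (C / ω) := by
  set D := d ω with hD
  have hD0 : 0 ≤ D := hd0 ω hω0
  have step1 : ∑ t ∈ Finset.range k, a t
      ≤ k * ω + ∑ t ∈ Finset.range k, ∫ y in ω..C, (if y < a t then (1:ℝ) else 0) := by
    have hterm : ∀ t ∈ Finset.range k,
        a t ≤ ω + ∫ y in ω..C, (if y < a t then (1:ℝ) else 0) := by
      intro t ht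
      rw [Finset.mem_range] at ht
      obtain ⟨h0, h1⟩ := ha t ht
      rw [ind_integral (a t) ω C hωC h1]
      rcases le_or_gt (a t) ω with h | h
      · rw [max_eq_right (by linarith)]; linarith
      · rw [max_eq_left (by linarith)]; linarith
    calc ∑ t ∈ Finset.range k, a t
        ≤ ∑ t ∈ Finset.range k, (ω + ∫ y in ω..C, (if y < a t then (1:ℝ) else 0)) :=
          Finset.sum_le_sum hterm
      _ = k * ω + ∑ t ∈ Finset.range k, ∫ y in ω..C, (if y < a t then (1:ℝ) else 0) := by
          rw [Finset.sum_add_distrib]; simp [mul_comm]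
  have hfun : (fun y : ℝ => ∑ t ∈ Finset.range k, (if y < a t then (1:ℝ) else 0))
      = fun y : ℝ => (((Finset.range k).filter fun t => y < a t).card : ℝ) := by
    funext y
    rw [Finset.sum_boole]
  have step2 : ∑ t ∈ Finset.range k, ∫ y in ω..C, (if y < a t then (1:ℝ) else 0)
      = ∫ y in ω..C, (((Finset.range k).filter fun t => y < a t).card : ℝ) := by
    rw [← intervalIntegral.integral_finset_sum (fun t _ => ind_integrable (a t) ω C)]
    exact integral_congr fun y _ => congrFun hfun y
  have h1int : IntervalIntegrable (fun y : ℝ => 1 / y) volume ω C := by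
    apply ContinuousOn.intervalIntegrable
    apply continuousOn_const.div continuousOn_id
    intro x hx
    rw [Set.uIcc_of_le hωC] at hx
    exact ne_of_gt (lt_of_lt_of_le hω0 hx.1)
  have hg_int : IntervalIntegrable (fun y : ℝ => D * β * (1 / y) + (D + 1)) volume ω C :=
    (h1int.const_mul (D * β)).add intervalIntegrable_const
  have hN_int : IntervalIntegrable
      (fun y : ℝ => (((Finset.range k).filter fun t => y < a t).card : ℝ)) volume ω C := by
    have h := IntervalIntegrable.sum (μ := volume) (a := ω) (b := C) (Finset.range k)
      (f := fun t (y : ℝ) => if y < a t then (1:ℝ) else 0)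
      (fun t _ => ind_integrable (a t) ω C)
    have heq : (∑ i ∈ Finset.range k, (fun t (y : ℝ) => if y < a t then (1:ℝ) else 0) i)
        = fun y : ℝ => (((Finset.range k).filter fun t => y < a t).card : ℝ) := by
      funext y
      simp only [Finset.sum_apply]
      exact congrFun hfun y
    rwa [heq] at h
  have step3 : ∫ y in ω..C, (((Finset.range k).filter fun t => y < a t).card : ℝ)
      ≤ ∫ y in ω..C, (D * β * (1 / y) + (D + 1)) := by
    apply integral_mono_on hωC hN_int hg_int
    intro y hy
    have hy0 : 0 < y := lt_of_lt_of_le hω0 hy.1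
    have h1 := hcount y hy0
    have hdy : d y ≤ D := hdmono ω y hω0 hy.1
    have hdy0 : 0 ≤ d y := hd0 y hy0
    have hβy : 0 ≤ β / y := div_nonneg hβ hy0.le
    have hmul := mul_le_mul_of_nonneg_left hdy hβy
    calc (((Finset.range k).filter fun t => y < a t).card : ℝ)
        ≤ (β / y + 1) * d y + 1 := h1
      _ = β / y * d y + d y + 1 := by ring
      _ ≤ β / y * D + D + 1 := by linarith
      _ = D * β * (1 / y) + (D + 1) := by field_simp; ring
  have step4 : ∫ y in ω..C, (D * β * (1 / y) + (D + 1))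
      = D * β * Real.log (C / ω) + (D + 1) * (C - ω) := by
    rw [intervalIntegral.integral_add (h1int.const_mul (D * β)) intervalIntegrable_const,
      intervalIntegral.integral_const_mul, integral_one_div (by
        rw [Set.uIcc_of_le hωC]; intro h; exact absurd h.1 (by linarith)),
      intervalIntegral.integral_const]
    simp [smul_eq_mul]; ring
  have hlog : 0 ≤ Real.log (C / ω) := Real.log_nonneg (by
    rw [le_div_iff₀ hω0]; linarith)
  calc ∑ t ∈ Finset.range k, a t
      ≤ k * ω + ∫ y in ω..C, (((Finset.range k).filter fun t => y < a t).card : ℝ) := by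
        rw [← step2]; exact step1
    _ ≤ k * ω + (D * β * Real.log (C / ω) + (D + 1) * (C - ω)) := by linarith [step3]
    _ ≤ k * ω + (D + 1) * C + D * β * Real.log (C / ω) := by nlinarith
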